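/- (Basic Perturbation Lemma, part 8.) Under the perturbation setup, the side condition φ_δ ∘ φ_δ = 0 holds. -/

import Mathlib

open LinearMap

/-- Basic Perturbation Lemma, part 8: `φ_δ ∘ φ_δ = 0`. -/
theorem bpl_φδ_φδ
    (R : Type*) [CommRing R] (N M : Type*)
    [AddCommGroup N] [Module R N] [AddCommGroup M] [Module R M]
    (dN : N →ₗ[R] N) (dM : M →ₗ[R] M)
    (hdN : dN ∘ₗ dN = 0) (hdM : dM ∘ₗ dM = 0)
    (f : N →ₗ[R] M) (g : M →ₗ[R] N) (φ : N →ₗ[R] N)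
    (hf : f ∘ₗ dN = dM ∘ₗ f) (hg : g ∘ₗ dM = dN ∘ₗ g)
    (hfg : f ∘ₗ g = LinearMap.id)
    (hhom : φ ∘ₗ dN + dN ∘ₗ φ + g ∘ₗ f = LinearMap.id)
    (hfφ : f ∘ₗ φ = 0) (hφg : φ ∘ₗ g = 0) (hφφ : φ ∘ₗ φ = 0)
    (δ : N →ₗ[R] N) (hδ : (dN + δ) ∘ₗ (dN + δ) = 0)
    (n : ℕ) (hnil : (φ ∘ₗ δ) ^ n = 0) :
    ((∑ i ∈ Finset.range n, ((-1 : R) ^ i • (φ ∘ₗ δ) ^ i)) ∘ₗ φ) ∘ₗ ((∑ i ∈ Finset.range n, ((-1 : R) ^ i • (φ ∘ₗ δ) ^ i)) ∘ₗ φ) = 0 := by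
  have key : ∀ j, φ * (φ * δ) ^ j * φ = 0 := by
    intro j
    cases j with
    | zero => simpa [Module.End.mul_eq_comp] using hφφ
    | succ k =>
      rw [pow_succ']
      calc φ * ((φ * δ) * (φ * δ) ^ k) * φ
          = (φ * φ) * (δ * (φ * δ) ^ k * φ) := by noncomm_ring
        _ = 0 := by rw [show φ * φ = 0 from hφφ, zero_mul]
  have main : (∑ i ∈ Finset.range n, ((-1 : R) ^ i • (φ * δ) ^ i)) * φ *
      ((∑ i ∈ Finset.range n, ((-1 : R) ^ i • (φ * δ) ^ i)) * φ) = 0 := by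
    rw [Finset.sum_mul, Finset.sum_mul]
    refine Finset.sum_eq_zero fun i _ => ?_
    rw [Finset.mul_sum]
    refine Finset.sum_eq_zero fun j _ => ?_
    have hk : (φ * δ) ^ i * φ * ((φ * δ) ^ j * φ) = 0 := by
      rw [mul_assoc, ← mul_assoc φ, key j, mul_zero]
    simp [smul_mul_assoc, mul_smul_comm, hk]
  simpa [Module.End.mul_eq_comp] using main
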